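/- Let Ω ⊆ ℝ^N be an open bounded set and 0 < β ≤ 1. Let u : Ω → ℝ satisfy [u]_{C^{0,β}(Ω)} < ∞ and [u]_{W^{β,q}(Ω)} < ∞ for some 1 ≤ q < ∞. Then for every p > q, [u]_{W^{β,p}(Ω)}^p ≤ ([u]_{C^{0,β}(Ω)})^{p-q} · [u]_{W^{β,q}(Ω)}^q, and consequently lim_{p→∞} [u]_{W^{β,p}(Ω)} = [u]_{C^{0,β}(Ω)} (assuming also the liminf lower bound from the fractional seminorm limit). -/

import Mathlib

open MeasureTheory ENNReal Filter Metric Set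

noncomputable section

abbrev Euc (N : ℕ) := EuclideanSpace ℝ (Fin N)

/-- Homogeneous Hölder seminorm `[u]_{C^{0,α}(Ω)}`, `ℝ≥0∞`-valued. -/
noncomputable def holderSemi {N : ℕ} (Ω : Set (Euc N)) (α : ℝ) (u : Euc N → ℝ) : ℝ≥0∞ :=
  ⨆ (x : Ω) (y : Ω) (_ : x.1 ≠ y.1),
    ENNReal.ofReal (|u x.1 - u y.1| / ‖x.1 - y.1‖ ^ α)

/-- `p`-th power of the Gagliardo seminorm `[u]_{W^{s,p}(Ω)}^p`. -/
noncomputable def gagliardoP {N : ℕ} (Ω : Set (Euc N)) (s p : ℝ) (u : Euc N → ℝ) : ℝ≥0∞ :=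
  ∫⁻ x in Ω, ∫⁻ y in Ω,
    ENNReal.ofReal (|u x - u y| ^ p / ‖x - y‖ ^ ((N : ℝ) + s * p))

/-- Gagliardo seminorm `[u]_{W^{s,p}(Ω)}`. -/
noncomputable def gagliardoSemi {N : ℕ} (Ω : Set (Euc N)) (s p : ℝ) (u : Euc N → ℝ) : ℝ≥0∞ :=
  gagliardoP Ω s p u ^ (1 / p)

/-- auxiliary: continuity of `c ^ e p` in the exponent for `c ∈ (0, ∞)`. -/
lemma aux_tendsto_rpow (c : ℝ≥0∞) (hc0 : c ≠ 0) (hct : c ≠ ⊤) {e : ℝ → ℝ} {l : ℝ}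
    (he : Tendsto e atTop (nhds l)) :
    Tendsto (fun p : ℝ => c ^ e p) atTop (nhds (c ^ l)) := by
  have hcr : 0 < c.toReal := ENNReal.toReal_pos hc0 hct
  have hc : c = ENNReal.ofReal c.toReal := (ENNReal.ofReal_toReal hct).symm
  rw [hc]
  have h1 : ∀ t : ℝ, ENNReal.ofReal c.toReal ^ t
      = ENNReal.ofReal (Real.exp (Real.log c.toReal * t)) := by
    intro t
    rw [ENNReal.ofReal_rpow_of_pos hcr, Real.rpow_def_of_pos hcr]
  simp only [h1]
  exact (ENNReal.continuous_ofReal.tendsto _).comp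
    ((Real.continuous_exp.tendsto _).comp (he.const_mul _))

/-- auxiliary: `1/p → 0`. -/
lemma aux_one_div : Tendsto (fun p : ℝ => 1 / p) atTop (nhds 0) := by
  simpa [one_div] using (tendsto_inv_atTop_zero (𝕜 := ℝ))

/-- Interpolation bound for the Gagliardo seminorm against the Hölder seminorm,
and convergence of `[u]_{W^{β,p}(Ω)}` to `[u]_{C^{0,β}(Ω)}` as `p → ∞`. -/
theorem stmt_3 {N : ℕ} (Ω : Set (Euc N)) (hΩ : IsOpen Ω)
    (hΩbd : Bornology.IsBounded Ω) (β : ℝ) (hβ : 0 < β) (hβ1 : β ≤ 1)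
    (q : ℝ) (hq : 1 ≤ q) (u : Euc N → ℝ)
    (hhol : holderSemi Ω β u ≠ ⊤) (hgag : gagliardoP Ω β q u ≠ ⊤) :
    (∀ p : ℝ, q < p →
      gagliardoP Ω β p u ≤ holderSemi Ω β u ^ (p - q) * gagliardoP Ω β q u) ∧
    Tendsto (fun p : ℝ => gagliardoSemi Ω β p u) atTop (nhds (holderSemi Ω β u)) := by
  have hq0 : (0 : ℝ) < q := lt_of_lt_of_le one_pos hq
  set H := holderSemi Ω β u with hHdef
  set G := gagliardoP Ω β q u with hGdef
  set Hr := H.toReal with hHr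
  have hHr0 : 0 ≤ Hr := ENNReal.toReal_nonneg
  -- Hölder bound
  have hA : ∀ x ∈ Ω, ∀ y ∈ Ω, |u x - u y| ≤ Hr * ‖x - y‖ ^ β := by
    intro x hx y hy
    by_cases hxy : x = y
    · subst hxy
      simp only [sub_self, abs_zero]
      exact mul_nonneg hHr0 (Real.rpow_nonneg (norm_nonneg _) β)
    · have hd : 0 < ‖x - y‖ := by
        rw [norm_sub_pos_iff]; exact hxy
      have h1 : ENNReal.ofReal (|u x - u y| / ‖x - y‖ ^ β) ≤ H := by
        rw [hHdef]
        unfold holderSemi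
        refine le_iSup₂_of_le (⟨x, hx⟩ : Ω) (⟨y, hy⟩ : Ω) ?_
        exact le_iSup_of_le hxy le_rfl
      have h2 : |u x - u y| / ‖x - y‖ ^ β ≤ Hr := by
        rw [← ENNReal.ofReal_le_iff_le_toReal hhol]
        exact h1
      have hdb : 0 < ‖x - y‖ ^ β := Real.rpow_pos_of_pos hd β
      calc |u x - u y| = (|u x - u y| / ‖x - y‖ ^ β) * ‖x - y‖ ^ β := by
            field_simp
        _ ≤ Hr * ‖x - y‖ ^ β := mul_le_mul_of_nonneg_right h2 hdb.le
  -- pointwise interpolation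
  have hpt : ∀ p : ℝ, q < p → ∀ x ∈ Ω, ∀ y ∈ Ω,
      ENNReal.ofReal (|u x - u y| ^ p / ‖x - y‖ ^ ((N : ℝ) + β * p))
      ≤ H ^ (p - q) * ENNReal.ofReal (|u x - u y| ^ q / ‖x - y‖ ^ ((N : ℝ) + β * q)) := by
    intro p hp x hx y hy
    have hp0 : (0 : ℝ) < p := lt_trans hq0 hp
    by_cases hxy : x = y
    · subst hxy
      simp [Real.zero_rpow hp0.ne']
    · have hd : 0 < ‖x - y‖ := by
        rw [norm_sub_pos_iff]; exact hxy
      set a := |u x - u y| with hadef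
      have ha0 : 0 ≤ a := abs_nonneg _
      rcases eq_or_lt_of_le ha0 with h0 | h0
      · rw [← h0, Real.zero_rpow hp0.ne', zero_div]
        simp
      · have e1 : β * (p - q) + ((N : ℝ) + β * q) = (N : ℝ) + β * p := by ring
        have hstep : a ^ p / ‖x - y‖ ^ ((N : ℝ) + β * p)
            = (a / ‖x - y‖ ^ β) ^ (p - q) * (a ^ q / ‖x - y‖ ^ ((N : ℝ) + β * q)) := by
          rw [Real.div_rpow ha0 (Real.rpow_nonneg hd.le β), ← Real.rpow_mul hd.le,
            div_mul_div_comm, ← Real.rpow_add h0, ← Real.rpow_add hd, sub_add_cancel, e1]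
        rw [hstep]
        have hb : a / ‖x - y‖ ^ β ≤ Hr :=
          (div_le_iff₀ (Real.rpow_pos_of_pos hd β)).2 (hA x hx y hy)
        calc ENNReal.ofReal ((a / ‖x - y‖ ^ β) ^ (p - q) * (a ^ q / ‖x - y‖ ^ ((N : ℝ) + β * q)))
            ≤ ENNReal.ofReal (Hr ^ (p - q) * (a ^ q / ‖x - y‖ ^ ((N : ℝ) + β * q))) :=
              ENNReal.ofReal_le_ofReal (mul_le_mul_of_nonneg_right
                (Real.rpow_le_rpow (div_nonneg ha0 (Real.rpow_nonneg hd.le β)) hb (by linarith))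
                (div_nonneg (Real.rpow_nonneg ha0 q) (Real.rpow_nonneg hd.le _)))
          _ = H ^ (p - q) * ENNReal.ofReal (a ^ q / ‖x - y‖ ^ ((N : ℝ) + β * q)) := by
              rw [ENNReal.ofReal_mul (Real.rpow_nonneg hHr0 _),
                ← ENNReal.ofReal_rpow_of_nonneg hHr0 (by linarith : (0:ℝ) ≤ p - q),
                ENNReal.ofReal_toReal hhol]
  -- interpolation inequality
  have key : ∀ p : ℝ, q < p → gagliardoP Ω β p u ≤ H ^ (p - q) * G := by
    intro p hp
    have hHpq : H ^ (p - q) ≠ ⊤ := ENNReal.rpow_ne_top_of_nonneg (by linarith) hhol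
    rw [hGdef]
    unfold gagliardoP
    calc (∫⁻ x in Ω, ∫⁻ y in Ω,
          ENNReal.ofReal (|u x - u y| ^ p / ‖x - y‖ ^ ((N : ℝ) + β * p)))
        ≤ ∫⁻ x in Ω, H ^ (p - q) * ∫⁻ y in Ω,
            ENNReal.ofReal (|u x - u y| ^ q / ‖x - y‖ ^ ((N : ℝ) + β * q)) := by
          refine setLIntegral_mono' hΩ.measurableSet fun x hx => ?_
          rw [← lintegral_const_mul' _ _ hHpq]
          exact setLIntegral_mono' hΩ.measurableSet fun y hy => hpt p hp x hx y hy
      _ = H ^ (p - q) * ∫⁻ x in Ω, ∫⁻ y in Ω,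
            ENNReal.ofReal (|u x - u y| ^ q / ‖x - y‖ ^ ((N : ℝ) + β * q)) :=
          lintegral_const_mul' _ _ hHpq
  refine ⟨key, ?_⟩
  refine tendsto_order.2 ⟨?_, ?_⟩
  · -- lower bound: ∀ b < H, eventually b < gagliardoSemi
    intro b hb
    rw [hHdef] at hb
    unfold holderSemi at hb
    rw [lt_iSup_iff] at hb
    obtain ⟨⟨x, hx⟩, hb⟩ := hb
    rw [lt_iSup_iff] at hb
    obtain ⟨⟨y, hy⟩, hb⟩ := hb
    rw [lt_iSup_iff] at hb
    obtain ⟨hne', hlt'⟩ := hb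
    have hne : x ≠ y := hne'
    have hd : 0 < ‖x - y‖ := by
      rw [norm_sub_pos_iff]; exact hne
    have hdb : 0 < ‖x - y‖ ^ β := Real.rpow_pos_of_pos hd β
    have hlt : b < ENNReal.ofReal (|u x - u y| / ‖x - y‖ ^ β) := hlt'
    have hbT : b ≠ ⊤ := (hlt.trans ENNReal.ofReal_lt_top).ne
    have hR0lt : b.toReal < |u x - u y| / ‖x - y‖ ^ β :=
      (ENNReal.lt_ofReal_iff_toReal_lt hbT).1 hlt
    set R0 := |u x - u y| / ‖x - y‖ ^ β with hR0def
    set t := (b.toReal + R0) / 2 with htdef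
    have hbt0 : 0 ≤ b.toReal := ENNReal.toReal_nonneg
    have ht1 : b.toReal < t := by rw [htdef]; linarith
    have ht2 : t < R0 := by rw [htdef]; linarith
    have ht0 : 0 < t := lt_of_le_of_lt hbt0 ht1
    have hbt : b < ENNReal.ofReal t := (ENNReal.lt_ofReal_iff_toReal_lt hbT).2 ht1
    obtain ⟨rx, hrx, hrxΩ⟩ := Metric.isOpen_iff.1 hΩ x hx
    obtain ⟨ry, hry, hryΩ⟩ := Metric.isOpen_iff.1 hΩ y hy
    -- continuity to choose δ
    have hRmul : R0 * ‖x - y‖ ^ β = |u x - u y| := by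
      rw [hR0def, div_mul_cancel₀ _ hdb.ne']
    have hpos0 : 0 < |u x - u y| - 2 * Hr * (0:ℝ) ^ β - t * (‖x - y‖ + 2 * 0) ^ β := by
      have h1 : t * ‖x - y‖ ^ β < |u x - u y| := by
        rw [← hRmul]; exact mul_lt_mul_of_pos_right ht2 hdb
      rw [Real.zero_rpow hβ.ne', mul_zero, sub_zero, mul_zero, add_zero]
      linarith
    have hcont : ContinuousAt
        (fun δ : ℝ => |u x - u y| - 2 * Hr * δ ^ β - t * (‖x - y‖ + 2 * δ) ^ β) 0 := by
      have c1 : ContinuousAt (fun δ : ℝ => δ ^ β) 0 :=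
        Real.continuousAt_rpow_const 0 β (Or.inr hβ.le)
      have hlin : ContinuousAt (fun δ : ℝ => ‖x - y‖ + 2 * δ) 0 := by fun_prop
      have c2' : ContinuousAt (fun z : ℝ => z ^ β) ((fun δ : ℝ => ‖x - y‖ + 2 * δ) 0) :=
        Real.continuousAt_rpow_const _ β (Or.inl (by simpa using hd.ne'))
      have c2 : ContinuousAt (fun δ : ℝ => (‖x - y‖ + 2 * δ) ^ β) 0 := by
        exact ContinuousAt.comp (g := fun z : ℝ => z ^ β)
          (f := fun δ : ℝ => ‖x - y‖ + 2 * δ) c2' hlin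
      exact (continuousAt_const.sub (continuousAt_const.mul c1)).sub
        (continuousAt_const.mul c2)
    have hev1 : ∀ᶠ δ in nhdsWithin (0:ℝ) (Ioi 0),
        0 < |u x - u y| - 2 * Hr * δ ^ β - t * (‖x - y‖ + 2 * δ) ^ β :=
      (hcont.tendsto.mono_left nhdsWithin_le_nhds).eventually_const_lt hpos0
    have hmin : (0:ℝ) < min (min rx ry) (‖x - y‖ / 4) :=
      lt_min (lt_min hrx hry) (div_pos hd (by norm_num))
    have hev2 : ∀ᶠ δ in nhdsWithin (0:ℝ) (Ioi 0), δ < min (min rx ry) (‖x - y‖ / 4) :=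
      (eventually_lt_nhds hmin).filter_mono nhdsWithin_le_nhds
    have hev3 : ∀ᶠ δ in nhdsWithin (0:ℝ) (Ioi 0), (0:ℝ) < δ := eventually_mem_nhdsWithin
    obtain ⟨δ, hg, hδlt, hδ0⟩ := (hev1.and (hev2.and hev3)).exists
    have hδrx : δ < rx := hδlt.trans_le ((min_le_left _ _).trans (min_le_left _ _))
    have hδry : δ < ry := hδlt.trans_le ((min_le_left _ _).trans (min_le_right _ _))
    have hδd : δ < ‖x - y‖ / 4 := hδlt.trans_le (min_le_right _ _)
    set D := ‖x - y‖ + 2 * δ with hDdef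
    have hD : 0 < D := by rw [hDdef]; linarith
    have hM : t * D ^ β < |u x - u y| - 2 * Hr * δ ^ β := by linarith
    have hBx : ball x δ ⊆ Ω := fun z hz => hrxΩ (ball_subset_ball hδrx.le hz)
    have hBy : ball y δ ⊆ Ω := fun z hz => hryΩ (ball_subset_ball hδry.le hz)
    -- pointwise lower bound on the integrand
    have hptl : ∀ p : ℝ, 0 < p → ∀ x' ∈ ball x δ, ∀ y' ∈ ball y δ,
        ENNReal.ofReal (t ^ p / D ^ (N : ℝ)) ≤
        ENNReal.ofReal (|u x' - u y'| ^ p / ‖x' - y'‖ ^ ((N : ℝ) + β * p)) := by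
      intro p hp x' hx' y' hy'
      have hx'Ω : x' ∈ Ω := hBx hx'
      have hy'Ω : y' ∈ Ω := hBy hy'
      have hxx' : ‖x' - x‖ < δ := by rwa [mem_ball, dist_eq_norm] at hx'
      have hyy' : ‖y' - y‖ < δ := by rwa [mem_ball, dist_eq_norm] at hy'
      have e1 : |u x' - u x| ≤ Hr * δ ^ β :=
        (hA x' hx'Ω x hx).trans (mul_le_mul_of_nonneg_left
          (Real.rpow_le_rpow (norm_nonneg _) hxx'.le hβ.le) hHr0)
      have e2 : |u y' - u y| ≤ Hr * δ ^ β :=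
        (hA y' hy'Ω y hy).trans (mul_le_mul_of_nonneg_left
          (Real.rpow_le_rpow (norm_nonneg _) hyy'.le hβ.le) hHr0)
      have e3 : |u x - u y| ≤ |u x - u x'| + |u x' - u y'| + |u y' - u y| := by
        have h : u x - u y = (u x - u x') + (u x' - u y') + (u y' - u y) := by ring
        rw [h]
        exact (abs_add_le _ _).trans (add_le_add_left (abs_add_le _ _) _)
      have e1' : |u x - u x'| ≤ Hr * δ ^ β := by rwa [abs_sub_comm]
      have hnum : t * D ^ β ≤ |u x' - u y'| := by linarith
      have hnum0 : 0 ≤ t * D ^ β := mul_nonneg ht0.le (Real.rpow_nonneg hD.le β)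
      have hden1 : ‖x' - y'‖ ≤ D := by
        have h : x' - y' = (x' - x) + (x - y) + (y - y') := by abel
        have h2 : ‖x' - y'‖ ≤ ‖x' - x‖ + ‖x - y‖ + ‖y - y'‖ := by
          rw [h]
          exact (norm_add_le _ _).trans (add_le_add_left (norm_add_le _ _) _)
        have h3 : ‖y - y'‖ = ‖y' - y‖ := norm_sub_rev _ _
        rw [hDdef]
        linarith
      have hden0 : 0 < ‖x' - y'‖ := by
        have h : x - y = (x - x') + (x' - y') + (y' - y) := by abel
        have h2 : ‖x - y‖ ≤ ‖x - x'‖ + ‖x' - y'‖ + ‖y' - y‖ := by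
          rw [h]
          exact (norm_add_le _ _).trans (add_le_add_left (norm_add_le _ _) _)
        have h3 : ‖x - x'‖ = ‖x' - x‖ := norm_sub_rev _ _
        linarith
      have hexp0 : (0:ℝ) ≤ (N : ℝ) + β * p :=
        add_nonneg (Nat.cast_nonneg N) (mul_nonneg hβ.le hp.le)
      have hkey : t ^ p / D ^ (N : ℝ) = (t * D ^ β) ^ p / D ^ ((N : ℝ) + β * p) := by
        rw [Real.mul_rpow ht0.le (Real.rpow_nonneg hD.le β), ← Real.rpow_mul hD.le,
          Real.rpow_add hD]
        rw [mul_div_mul_right _ _ (Real.rpow_pos_of_pos hD (β * p)).ne']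
      have hfrac : t ^ p / D ^ (N : ℝ)
          ≤ |u x' - u y'| ^ p / ‖x' - y'‖ ^ ((N : ℝ) + β * p) := by
        rw [hkey]
        exact div_le_div₀ (Real.rpow_nonneg (le_trans hnum0 hnum) p)
          (Real.rpow_le_rpow hnum0 hnum hp.le)
          (Real.rpow_pos_of_pos hden0 _)
          (Real.rpow_le_rpow hden0.le hden1 hexp0)
      exact ENNReal.ofReal_le_ofReal hfrac
    -- integral lower bound
    have hGlow : ∀ p : ℝ, 0 < p →
        ENNReal.ofReal (t ^ p / D ^ (N : ℝ)) * volume (ball y δ) * volume (ball x δ)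
          ≤ gagliardoP Ω β p u := by
      intro p hp
      have step1 : ENNReal.ofReal (t ^ p / D ^ (N : ℝ)) * volume (ball y δ) * volume (ball x δ)
          = ∫⁻ x' in ball x δ, ∫⁻ y' in ball y δ, ENNReal.ofReal (t ^ p / D ^ (N : ℝ)) := by
        rw [setLIntegral_const, setLIntegral_const]
      rw [step1]
      calc (∫⁻ x' in ball x δ, ∫⁻ y' in ball y δ, ENNReal.ofReal (t ^ p / D ^ (N : ℝ)))
          ≤ ∫⁻ x' in ball x δ, ∫⁻ y' in ball y δ,
              ENNReal.ofReal (|u x' - u y'| ^ p / ‖x' - y'‖ ^ ((N : ℝ) + β * p)) :=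
            setLIntegral_mono' measurableSet_ball fun x' hx' =>
              setLIntegral_mono' measurableSet_ball fun y' hy' => hptl p hp x' hx' y' hy'
        _ ≤ ∫⁻ x' in ball x δ, ∫⁻ y' in Ω,
              ENNReal.ofReal (|u x' - u y'| ^ p / ‖x' - y'‖ ^ ((N : ℝ) + β * p)) :=
            lintegral_mono fun x' => lintegral_mono_set hBy
        _ ≤ gagliardoP Ω β p u := lintegral_mono_set hBx
    -- conclude
    set W := ENNReal.ofReal ((D ^ (N : ℝ))⁻¹) * volume (ball y δ) * volume (ball x δ)
      with hWdef
    have hW0 : W ≠ 0 := by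
      rw [hWdef]
      refine mul_ne_zero (mul_ne_zero ?_ ?_) ?_
      · exact (ENNReal.ofReal_pos.2 (inv_pos.2 (Real.rpow_pos_of_pos hD _))).ne'
      · exact (measure_ball_pos volume y hδ0).ne'
      · exact (measure_ball_pos volume x hδ0).ne'
    have hWT : W ≠ ⊤ := by
      rw [hWdef]
      exact ENNReal.mul_ne_top
        (ENNReal.mul_ne_top ENNReal.ofReal_ne_top measure_ball_lt_top.ne)
        measure_ball_lt_top.ne
    have hWlim : Tendsto (fun p : ℝ => ENNReal.ofReal t * W ^ (1/p)) atTop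
        (nhds (ENNReal.ofReal t * W ^ (0:ℝ))) :=
      ENNReal.Tendsto.const_mul (aux_tendsto_rpow W hW0 hWT aux_one_div)
        (Or.inr ENNReal.ofReal_ne_top)
    rw [ENNReal.rpow_zero, mul_one] at hWlim
    filter_upwards [hWlim.eventually_const_lt hbt, eventually_ge_atTop (1:ℝ)] with p hplt hp1
    have hp0 : (0:ℝ) < p := lt_of_lt_of_le one_pos hp1
    have hle : ENNReal.ofReal t * W ^ (1/p) ≤ gagliardoSemi Ω β p u := by
      have h1 : ENNReal.ofReal (t ^ p / D ^ (N : ℝ)) * volume (ball y δ) * volume (ball x δ)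
          = ENNReal.ofReal t ^ p * W := by
        rw [hWdef, div_eq_mul_inv, ENNReal.ofReal_mul (Real.rpow_nonneg ht0.le p),
          ENNReal.ofReal_rpow_of_nonneg ht0.le hp0.le]
        ring
      calc ENNReal.ofReal t * W ^ (1/p)
          = (ENNReal.ofReal t ^ p * W) ^ (1/p) := by
            conv_rhs => rw [ENNReal.mul_rpow_of_nonneg _ _ (le_of_lt (one_div_pos.2 hp0)),
              ← ENNReal.rpow_mul]
            rw [mul_one_div_cancel hp0.ne', ENNReal.rpow_one]
        _ ≤ (gagliardoP Ω β p u) ^ (1/p) :=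
            ENNReal.rpow_le_rpow (h1 ▸ hGlow p hp0) (le_of_lt (one_div_pos.2 hp0))
        _ = gagliardoSemi Ω β p u := rfl
    exact lt_of_lt_of_le hplt hle
  · -- upper bound
    intro a ha
    by_cases hdeg : H = 0 ∨ G = 0
    · have ha0 : 0 < a := lt_of_le_of_lt zero_le ha
      filter_upwards [eventually_gt_atTop q] with p hp
      have hp0 : (0 : ℝ) < p := lt_trans hq0 hp
      have hzero : gagliardoP Ω β p u = 0 := by
        refine le_antisymm ?_ zero_le
        have h := key p hp
        rcases hdeg with h0 | h0
        · rw [h0, ENNReal.zero_rpow_of_pos (by linarith), zero_mul] at h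
          exact h
        · rw [h0, mul_zero] at h
          exact h
      unfold gagliardoSemi
      rw [hzero, ENNReal.zero_rpow_of_pos (one_div_pos.2 hp0)]
      exact ha0
    · push_neg at hdeg
      obtain ⟨hH0, hG0⟩ := hdeg
      have he1 : Tendsto (fun p : ℝ => (p - q) * (1 / p)) atTop (nhds 1) := by
        have h0 : Tendsto (fun p : ℝ => 1 - q * (1 / p)) atTop (nhds (1 - q * 0)) :=
          tendsto_const_nhds.sub (tendsto_const_nhds.mul aux_one_div)
        rw [mul_zero, sub_zero] at h0
        refine h0.congr' ?_
        filter_upwards [eventually_gt_atTop 0] with p hp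
        field_simp
      have hlim : Tendsto (fun p : ℝ => H ^ ((p - q) * (1 / p)) * G ^ (1 / p)) atTop
          (nhds (H ^ (1:ℝ) * G ^ (0:ℝ))) := by
        refine ENNReal.Tendsto.mul (aux_tendsto_rpow H hH0 hhol he1) ?_
          (aux_tendsto_rpow G hG0 hgag aux_one_div) ?_
        · left; rw [ENNReal.rpow_one]; exact hH0
        · left; rw [ENNReal.rpow_zero]; exact one_ne_zero
      rw [ENNReal.rpow_one, ENNReal.rpow_zero, mul_one] at hlim
      filter_upwards [hlim.eventually_lt_const ha, eventually_gt_atTop q] with p hlt hp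
      have hp0 : (0 : ℝ) < p := lt_trans hq0 hp
      calc gagliardoSemi Ω β p u = gagliardoP Ω β p u ^ (1 / p) := rfl
        _ ≤ (H ^ (p - q) * G) ^ (1 / p) :=
            ENNReal.rpow_le_rpow (key p hp) (le_of_lt (one_div_pos.2 hp0))
        _ = H ^ ((p - q) * (1 / p)) * G ^ (1 / p) := by
            rw [ENNReal.mul_rpow_of_nonneg _ _ (le_of_lt (one_div_pos.2 hp0)),
              ← ENNReal.rpow_mul]
        _ < a := hlt
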